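/- Let (aₙ) be a sequence of positive reals with a₀ = 1 such that every coefficientwise accumulation point of the polynomials Xₙ(s) = Σ_{k=0}^n (a_{n−k}/aₙ)sᵏ has positive coefficient of s. Then the map τ sending Σ cₖsᵏ (with c₁ ≠ 0) to (1/c₁)·Σ c_{k+1}sᵏ maps the accumulation set Ω into itself. -/

import Mathlib

open Filter

/-- If every accumulation point of the sequence of opposite polynomials of a positive
sequence `(aₙ)` with `a₀ = 1` has positive coefficient of `s`, then the
shift-and-renormalize operator `τ : Σ cₖsᵏ ↦ (1/c₁)·Σ c_{k+1}sᵏ` maps the accumulation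
set `Ω` into itself. -/
theorem stmt_13 (a : ℕ → ℝ) (hpos : ∀ n, 0 < a n) (h0 : a 0 = 1)
    (Ω : Set (ℕ → ℝ))
    (hΩ : Ω = {x : ℕ → ℝ | MapClusterPt x atTop
      (fun n k => if k ≤ n then a (n - k) / a n else 0)})
    (hlin : ∀ x ∈ Ω, 0 < x 1) :
    ∀ x ∈ Ω, (fun k => x (k + 1) / x 1) ∈ Ω := by
  intro x hx
  have hx1 : 0 < x 1 := hlin x hx
  subst hΩ
  set u : ℕ → ℕ → ℝ := fun n k => if k ≤ n then a (n - k) / a n else 0 with hu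
  have hx' : MapClusterPt x atTop u := hx
  -- key identity : for n ≥ 1, u (n-1) = τ (u n)
  have key : ∀ n : ℕ, 1 ≤ n → (fun k => u n (k + 1) / u n 1) = u (n - 1) := by
    intro n hn
    funext k
    have han : a n ≠ 0 := (hpos n).ne'
    have han1 : a (n - 1) ≠ 0 := (hpos (n - 1)).ne'
    simp only [u, if_pos hn]
    by_cases hk : k + 1 ≤ n
    · rw [if_pos hk, if_pos (by omega : k ≤ n - 1)]
      have : n - (k + 1) = n - 1 - k := by omega
      rw [this]
      field_simp
    · rw [if_neg hk, if_neg (by omega : ¬ k ≤ n - 1), zero_div]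
  rw [mapClusterPt_iff_frequently] at hx'
  rw [Set.mem_setOf_eq, mapClusterPt_iff_frequently]
  intro V hV
  -- τ is continuous at x
  have hT : ContinuousAt (fun y : ℕ → ℝ => fun k => y (k + 1) / y 1) x := by
    apply continuousAt_pi.2
    intro k
    exact ((continuous_apply (k + 1)).continuousAt).div
      ((continuous_apply 1).continuousAt) hx1.ne'
  have hV' : (fun y : ℕ → ℝ => fun k => y (k + 1) / y 1) ⁻¹' V ∈ nhds x := hT hV
  have hfreq := hx' _ hV'
  rw [frequently_atTop] at hfreq ⊢
  intro b
  obtain ⟨n, hn, hnV⟩ := hfreq (b + 1)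
  refine ⟨n - 1, by omega, ?_⟩
  rw [← key n (by omega)]
  exact hnV
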